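/- Let p, q, m be integers with p ≥ 2, |q| ≥ 2, and p + 1 < m < 2p − 1. Then the set 𝒬 has maximum |p − q|/(|q|(|q|−1)) and minimum −|p − q|/(|q|(|q|−1)); that is, both values lie in 𝒬, and every element x of 𝒬 satisfies |x| ≤ |p − q|/(|q|(|q|−1)). -/

import Mathlib

/-- The set `𝒜` of integer sequences `(a_k)_{k≥1}` (indexed here by `k : ℕ`, so `a k`
stands for `a_{k+1}`) with `|a_k| ≤ m - 1` and `∑_{k≥1} a_k p^{-k} = 1`. -/
def seqA (p m : ℤ) : Set (ℕ → ℤ) :=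
  {a | (∀ k, |a k| ≤ m - 1) ∧ HasSum (fun k => (a k : ℝ) * ((p : ℝ)⁻¹) ^ (k + 1)) 1}

/-- The set `ℬ` of integer sequences `(b_k)_{k≥1}` with `|b_k| ≤ m - 1` and
`∑_{k≥1} b_k p^{-k} = 0`. -/
def seqB (p m : ℤ) : Set (ℕ → ℤ) :=
  {b | (∀ k, |b k| ≤ m - 1) ∧ HasSum (fun k => (b k : ℝ) * ((p : ℝ)⁻¹) ^ (k + 1)) 0}

/-- `𝒮 = { ∑_{k≥1} a_k q^{-k} : (a_k) ∈ 𝒜 }`. -/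
def setS (p q m : ℤ) : Set ℝ :=
  {x | ∃ a ∈ seqA p m, HasSum (fun k => (a k : ℝ) * ((q : ℝ)⁻¹) ^ (k + 1)) x}

/-- `𝒮' = { ∑_{k≥1} k a_k p^{-k} : (a_k) ∈ 𝒜 }`. -/
def setS' (p m : ℤ) : Set ℝ :=
  {x | ∃ a ∈ seqA p m,
    HasSum (fun k => ((k + 1 : ℕ) : ℝ) * (a k : ℝ) * ((p : ℝ)⁻¹) ^ (k + 1)) x}

/-- `𝒬 = { ∑_{k≥1} b_k q^{-k} : (b_k) ∈ ℬ }`. -/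
def setQ (p q m : ℤ) : Set ℝ :=
  {x | ∃ b ∈ seqB p m, HasSum (fun k => (b k : ℝ) * ((q : ℝ)⁻¹) ^ (k + 1)) x}

/-- `𝒬' = { ∑_{k≥1} k b_k p^{-k} : (b_k) ∈ ℬ }`. -/
def setQ' (p m : ℤ) : Set ℝ :=
  {x | ∃ b ∈ seqB p m,
    HasSum (fun k => ((k + 1 : ℕ) : ℝ) * (b k : ℝ) * ((p : ℝ)⁻¹) ^ (k + 1)) x}

private lemma witness_hasSum (p σ : ℤ) (w : ℝ) (hσ : σ = 1 ∨ σ = -1) (hw : |w| < 1) :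
    HasSum (fun k => ((if k = 0 then σ else σ ^ k * (σ - p) : ℤ) : ℝ) * w ^ (k + 1))
      (((σ : ℝ) - p) * w / (1 - (σ : ℝ) * w) + (p : ℝ) * w) := by
  have habs : |(σ : ℝ) * w| < 1 := by
    rcases hσ with h | h <;> subst h <;> simpa [abs_mul] using hw
  have hg : HasSum (fun k => ((σ : ℝ) - p) * w * ((σ : ℝ) * w) ^ k)
      (((σ : ℝ) - p) * w / (1 - (σ : ℝ) * w)) := by
    have h := (hasSum_geometric_of_abs_lt_one habs).mul_left (((σ : ℝ) - p) * w)
    simpa [div_eq_mul_inv] using h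
  have hh : HasSum (fun k : ℕ => if k = 0 then (p : ℝ) * w else 0) ((p : ℝ) * w) :=
    hasSum_ite_eq 0 _
  have hsum := hg.add hh
  convert hsum using 1
  funext k
  rcases k with _ | k
  · simp only [if_pos rfl, pow_one, mul_pow, pow_zero, mul_one]
    push_cast; ring
  · simp only [Nat.succ_ne_zero, if_neg, mul_pow]
    push_cast
    rw [pow_succ w k]
    ring


private lemma mem_aux (p q m ε : ℤ) (hp : 2 ≤ p) (hq : 2 ≤ |q|) (hm1 : p + 1 < m)
    (hε : ε = 1 ∨ ε = -1) :
    ((ε * (if 0 ≤ q then q - p else p - q) : ℤ) : ℝ) / ((|q| : ℝ) * ((|q| : ℝ) - 1))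
      ∈ setQ p q m := by
  have hε1 : |ε| = 1 := by rcases hε with h | h <;> simp [h]
  set σ : ℤ := if 0 ≤ q then 1 else -1 with hσdef
  have hσ : σ = 1 ∨ σ = -1 := by by_cases h : 0 ≤ q <;> simp [hσdef, h]
  have hσ1 : |σ| = 1 := by rcases hσ with h | h <;> simp [h]
  have hP1 : (1 : ℝ) < (p : ℝ) := by exact_mod_cast (by omega : (1:ℤ) < p)
  have hwp : |(p : ℝ)⁻¹| < 1 := by
    rw [abs_of_pos (by positivity), inv_lt_one_iff₀]
    right; exact hP1
  have hQ2 : (2 : ℝ) ≤ |(q : ℝ)| := by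
    rw [← Int.cast_abs]; exact_mod_cast hq
  have hqne : (q : ℝ) ≠ 0 := by
    intro h; rw [h] at hQ2; simp at hQ2; linarith
  have hwq : |(q : ℝ)⁻¹| < 1 := by
    rw [abs_inv]
    rw [inv_lt_one_iff₀]; right; linarith
  have hfun : ∀ w : ℝ,
      (fun k => ((ε * (if k = 0 then σ else σ ^ k * (σ - p)) : ℤ) : ℝ) * w ^ (k + 1)) =
      fun k => (ε : ℝ) * (((if k = 0 then σ else σ ^ k * (σ - p) : ℤ) : ℝ) * w ^ (k + 1)) := by
    intro w; funext k
    rcases k with _ | k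
    · simp only [if_pos rfl]; push_cast; ring
    · simp only [if_neg (Nat.succ_ne_zero k)]; push_cast; ring
  refine ⟨fun k => ε * (if k = 0 then σ else σ ^ k * (σ - p)), ⟨?_, ?_⟩, ?_⟩
  · intro k
    rw [abs_mul, hε1, one_mul]
    rcases k with _ | k
    · rw [if_pos rfl, hσ1]; omega
    · rw [if_neg (Nat.succ_ne_zero k), abs_mul, abs_pow, hσ1, one_pow, one_mul]
      rcases hσ with h | h <;> rw [h]
      · rw [abs_sub_comm, abs_of_nonneg (by omega : (0:ℤ) ≤ p - 1)]; omega
      · rw [show (-1 : ℤ) - p = -(p + 1) by ring, abs_neg,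
          abs_of_nonneg (by omega : (0:ℤ) ≤ p + 1)]; omega
  · rw [hfun]
    have h := (witness_hasSum p σ ((p:ℝ)⁻¹) hσ hwp).mul_left (ε : ℝ)
    have hval : ((σ : ℝ) - p) * (p:ℝ)⁻¹ / (1 - (σ : ℝ) * (p:ℝ)⁻¹) + (p : ℝ) * (p:ℝ)⁻¹ = 0 := by
      have hPne : (p : ℝ) ≠ 0 := by linarith
      have hlt := (abs_lt.mp hwp)
      have hp1 : (p : ℝ) - 1 ≠ 0 := by intro hc; nlinarith
      have hp2 : (p : ℝ) + 1 ≠ 0 := by intro hc; nlinarith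
      rcases hσ with hh | hh <;> rw [hh] <;> push_cast
      · have hne : 1 - 1 * (p:ℝ)⁻¹ ≠ 0 := by
          have := hlt.2; intro hc; rw [one_mul] at hc; nlinarith [hlt.2]
        field_simp
        try ring
      · have hne : 1 - (-1) * (p:ℝ)⁻¹ ≠ 0 := by
          have := hlt.1; intro hc; nlinarith [hlt.1]
        have hne2 : (1 : ℝ) + (p:ℝ)⁻¹ ≠ 0 := by
          have := hlt.1; intro hc; nlinarith [hlt.1]
        have hp3 : (1 : ℝ) + (p : ℝ) ≠ 0 := by intro hc; nlinarith
        field_simp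
        try ring
        rw [sub_sub, ← add_one_mul, add_comm (p:ℝ) 1, mul_inv_cancel₀ hp3, sub_self]
    rw [hval, mul_zero] at h
    exact h
  · rw [hfun]
    have h := (witness_hasSum p σ ((q:ℝ)⁻¹) hσ hwq).mul_left (ε : ℝ)
    have hlt := abs_lt.mp hwq
    have hval : (ε : ℝ) * (((σ : ℝ) - p) * (q:ℝ)⁻¹ / (1 - (σ : ℝ) * (q:ℝ)⁻¹) + (p : ℝ) * (q:ℝ)⁻¹)
        = ((ε * (if 0 ≤ q then q - p else p - q) : ℤ) : ℝ) / ((|q| : ℝ) * ((|q| : ℝ) - 1)) := by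
      by_cases hq0 : 0 ≤ q
      · have hσ1' : σ = 1 := by simp [hσdef, hq0]
        have habs : |(q : ℝ)| = (q : ℝ) := abs_of_nonneg (by exact_mod_cast hq0)
        rw [hσ1', if_pos hq0, habs]
        have hQge : (2 : ℝ) ≤ (q : ℝ) := by
          rwa [abs_of_nonneg (by exact_mod_cast hq0)] at hQ2
        have h1 : (q : ℝ) - 1 ≠ 0 := by intro hc; nlinarith
        have hne : 1 - (1 : ℝ) * (q:ℝ)⁻¹ ≠ 0 := by
          intro hc; rw [one_mul] at hc
          have := hlt.2; nlinarith
        push_cast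
        field_simp
        try ring
      · have hσ1' : σ = -1 := by simp [hσdef, hq0]
        have habs : |(q : ℝ)| = -(q : ℝ) := abs_of_nonpos (by exact_mod_cast (by omega : q ≤ 0))
        rw [hσ1', if_neg hq0, habs]
        have hqneg : q ≤ -2 := by
          have h' : |q| = -q := abs_of_nonpos (by omega)
          omega
        have hQle : (q : ℝ) ≤ -2 := by exact_mod_cast hqneg
        have h1 : -(q : ℝ) - 1 ≠ 0 := by intro hc; nlinarith
        have hne : 1 - (-1 : ℝ) * (q:ℝ)⁻¹ ≠ 0 := by
          intro hc
          have := hlt.1; nlinarith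
        have hne2 : (1 : ℝ) + (q:ℝ)⁻¹ ≠ 0 := by
          intro hc
          have := hlt.1; nlinarith
        have hq1 : (q : ℝ) + 1 ≠ 0 := by intro hc; nlinarith
        have hd : 1 - (-1 : ℝ) * (q:ℝ)⁻¹ = ((q : ℝ) + 1) * (q:ℝ)⁻¹ := by
          field_simp
          ring
        push_cast
        rw [hd, mul_div_mul_right _ _ (inv_ne_zero hqne)]
        field_simp
        ring
    rw [hval] at h
    exact h

private lemma bound_aux (p q m : ℤ) (hp : 2 ≤ p) (hq : 2 ≤ |q|)
    (hm2 : m < 2 * p - 1) :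
    ∀ x ∈ setQ p q m, |x| ≤ (|p - q| : ℝ) / ((|q| : ℝ) * ((|q| : ℝ) - 1)) := by
  rintro x ⟨b, ⟨hbb, hb0⟩, hbx⟩
  have hP2 : (2 : ℝ) ≤ (p : ℝ) := by exact_mod_cast hp
  have hPne : (p : ℝ) ≠ 0 := by linarith
  have hQ2 : (2 : ℝ) ≤ |(q : ℝ)| := by
    have : ((2 : ℤ) : ℝ) ≤ ((|q| : ℤ) : ℝ) := by exact_mod_cast hq
    rwa [Int.cast_abs] at this
  have hqne : (q : ℝ) ≠ 0 := by
    intro h; rw [h] at hQ2; simp at hQ2; linarith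
  have hwp : |(p : ℝ)⁻¹| < 1 := by
    rw [abs_of_pos (by positivity), inv_lt_one_iff₀]; right; linarith
  have hwq : |(q : ℝ)⁻¹| < 1 := by
    rw [abs_inv, inv_lt_one_iff₀]; right; linarith
  -- the integer partial-sum sequence
  set s : ℕ → ℤ := fun n => ∑ k ∈ Finset.range n, b k * p ^ (n - 1 - k) with hsdef
  have hs0 : s 0 = 0 := by simp [hsdef]
  have hrec : ∀ n, s (n + 1) = p * s n + b n := by
    intro n
    simp only [hsdef, Finset.sum_range_succ]
    have h1 : ∀ k ∈ Finset.range n,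
        b k * p ^ (n + 1 - 1 - k) = p * (b k * p ^ (n - 1 - k)) := by
      intro k hk
      rw [Finset.mem_range] at hk
      rw [show n + 1 - 1 - k = (n - 1 - k) + 1 by omega, pow_succ]
      ring
    rw [Finset.sum_congr rfl h1, ← Finset.mul_sum]
    simp
  have hpart : ∀ n, ∑ k ∈ Finset.range n, (b k : ℝ) * ((p : ℝ)⁻¹) ^ (k + 1)
      = (s n : ℝ) / (p : ℝ) ^ n := by
    intro n
    induction n with
    | zero => simp [hs0]
    | succ n ih =>
      rw [Finset.sum_range_succ, ih, hrec n]
      push_cast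
      rw [inv_pow]
      field_simp
      ring
  -- |s n| ≤ 1
  have hsb : ∀ n, |s n| ≤ 1 := by
    intro n
    have htail : HasSum (fun k => (b (k + n) : ℝ) * ((p : ℝ)⁻¹) ^ (k + n + 1))
        (-(s n : ℝ) / (p : ℝ) ^ n) := by
      refine (hasSum_nat_add_iff (f := fun k => (b k : ℝ) * ((p : ℝ)⁻¹) ^ (k + 1)) n).mpr ?_
      have h2 : -(s n : ℝ) / (p : ℝ) ^ n
          + ∑ i ∈ Finset.range n, (b i : ℝ) * ((p : ℝ)⁻¹) ^ (i + 1) = 0 := by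
        rw [hpart n]; ring
      rw [h2]
      exact hb0
    have hub : HasSum (fun k : ℕ => ((m : ℝ) - 1) * ((p : ℝ)⁻¹) ^ (k + n + 1))
        (((m : ℝ) - 1) * ((p : ℝ)⁻¹) ^ (n + 1) / (1 - (p : ℝ)⁻¹)) := by
      have h := (hasSum_geometric_of_abs_lt_one hwp).mul_left
        (((m : ℝ) - 1) * ((p : ℝ)⁻¹) ^ (n + 1))
      have he : (fun k : ℕ => ((m : ℝ) - 1) * ((p : ℝ)⁻¹) ^ (n + 1) * ((p : ℝ)⁻¹) ^ k)
          = fun k : ℕ => ((m : ℝ) - 1) * ((p : ℝ)⁻¹) ^ (k + n + 1) := by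
        funext k
        rw [mul_assoc, ← pow_add]
        ring_nf
      rw [he] at h
      simpa [div_eq_mul_inv] using h
    have hbd : ∀ k : ℕ, |(b (k + n) : ℝ) * ((p : ℝ)⁻¹) ^ (k + n + 1)|
        ≤ ((m : ℝ) - 1) * ((p : ℝ)⁻¹) ^ (k + n + 1) := by
      intro k
      rw [abs_mul, abs_pow, abs_of_pos (a := (p:ℝ)⁻¹) (by positivity)]
      have h1 : |(b (k + n) : ℝ)| ≤ (m : ℝ) - 1 := by
        have := hbb (k + n)
        have h2 : ((|b (k + n)| : ℤ) : ℝ) ≤ ((m - 1 : ℤ) : ℝ) := by exact_mod_cast this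
        rw [Int.cast_abs] at h2
        push_cast at h2
        linarith
      exact mul_le_mul_of_nonneg_right h1 (by positivity)
    have hle : |-(s n : ℝ) / (p : ℝ) ^ n|
        ≤ ((m : ℝ) - 1) * ((p : ℝ)⁻¹) ^ (n + 1) / (1 - (p : ℝ)⁻¹) := by
      rw [abs_le]
      constructor
      · exact hasSum_le (fun k => neg_le_of_abs_le (hbd k)) hub.neg htail
      · exact hasSum_le (fun k => le_of_abs_le (hbd k)) htail hub
    have hUP : ((m : ℝ) - 1) * ((p : ℝ)⁻¹) ^ (n + 1) / (1 - (p : ℝ)⁻¹) * (p : ℝ) ^ n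
        = ((m : ℝ) - 1) / ((p : ℝ) - 1) := by
      have hne : 1 - (p : ℝ)⁻¹ ≠ 0 := by
        have : (p : ℝ)⁻¹ < 1 := (abs_lt.mp hwp).2
        intro hc; nlinarith
      have hp1 : (p : ℝ) - 1 ≠ 0 := by intro hc; nlinarith
      rw [inv_pow]
      field_simp
      ring
    have habs : |(s n : ℝ)| ≤ ((m : ℝ) - 1) / ((p : ℝ) - 1) := by
      have hpn : (0 : ℝ) < (p : ℝ) ^ n := by positivity
      have h3 : |(s n : ℝ)| / (p : ℝ) ^ n
          ≤ ((m : ℝ) - 1) * ((p : ℝ)⁻¹) ^ (n + 1) / (1 - (p : ℝ)⁻¹) := by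
        rw [← abs_of_pos hpn, ← abs_div]
        have : -(s n : ℝ) / (p : ℝ) ^ n = -((s n : ℝ) / (p : ℝ) ^ n) := by ring
        rw [this, abs_neg] at hle
        exact hle
      calc |(s n : ℝ)| = |(s n : ℝ)| / (p : ℝ) ^ n * (p : ℝ) ^ n := by field_simp
        _ ≤ ((m : ℝ) - 1) * ((p : ℝ)⁻¹) ^ (n + 1) / (1 - (p : ℝ)⁻¹) * (p : ℝ) ^ n := by
            exact mul_le_mul_of_nonneg_right h3 (le_of_lt hpn)
        _ = ((m : ℝ) - 1) / ((p : ℝ) - 1) := hUP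
    have hlt2 : |(s n : ℝ)| < 2 := by
      have hm' : (m : ℝ) - 1 < 2 * ((p : ℝ) - 1) := by
        have : (m : ℝ) < 2 * (p : ℝ) - 1 := by exact_mod_cast hm2
        linarith
      have hp1 : (0 : ℝ) < (p : ℝ) - 1 := by linarith
      calc |(s n : ℝ)| ≤ ((m : ℝ) - 1) / ((p : ℝ) - 1) := habs
        _ < 2 := by rw [div_lt_iff₀ hp1]; linarith
    have : |s n| < 2 := by
      have h4 : ((|s n| : ℤ) : ℝ) < 2 := by rwa [Int.cast_abs]
      exact_mod_cast h4
    omega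
  -- now the q-side
  set r : ℝ := (q : ℝ)⁻¹ with hrdef
  have hrgeo : Summable (fun k : ℕ => |r| ^ (k + 1)) := by
    have := (summable_geometric_of_abs_lt_one (r := |r|) (by rwa [abs_abs])).mul_left |r|
    refine this.congr fun k => ?_
    rw [pow_succ]; ring
  have husum : Summable (fun k : ℕ => (s (k + 1) : ℝ) * r ^ (k + 1)) := by
    refine Summable.of_norm_bounded hrgeo fun k => ?_
    rw [Real.norm_eq_abs, abs_mul, abs_pow]
    have h1 : |(s (k + 1) : ℝ)| ≤ 1 := by
      have h2 : ((|s (k + 1)| : ℤ) : ℝ) ≤ 1 := by exact_mod_cast hsb (k + 1)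
      rwa [Int.cast_abs] at h2
    nlinarith [abs_nonneg r, pow_nonneg (abs_nonneg r) (k+1), h1,
      pow_nonneg (abs_nonneg r) (k+1)]
  set T : ℝ := ∑' k, (s (k + 1) : ℝ) * r ^ (k + 1) with hTdef
  have hT : HasSum (fun k : ℕ => (s (k + 1) : ℝ) * r ^ (k + 1)) T := husum.hasSum
  have hv : HasSum (fun k : ℕ => (s k : ℝ) * r ^ k) T := by
    have h := (hasSum_nat_add_iff (f := fun k : ℕ => (s k : ℝ) * r ^ k) (g := T) 1).mp hT
    simpa [hs0] using h
  have hx2 : HasSum (fun k : ℕ => (b k : ℝ) * r ^ (k + 1)) (T - (p : ℝ) * r * T) := by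
    have h := hT.sub (hv.mul_left ((p : ℝ) * r))
    convert h using 1
    case e'_3 => rfl
    funext k
    have hb' : (b k : ℝ) = (s (k + 1) : ℝ) - (p : ℝ) * (s k : ℝ) := by
      have h5 := hrec k
      have h6 : ((s (k + 1) : ℤ) : ℝ) = ((p * s k + b k : ℤ) : ℝ) := by rw [h5]
      push_cast at h6
      linarith
    rw [hb', pow_succ]
    ring
  have hxT : x = T - (p : ℝ) * r * T := hbx.unique hx2
  have hQ1 : (1 : ℝ) < |(q : ℝ)| := by linarith
  have hQne : |(q : ℝ)| ≠ 0 := by positivity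
  have hQ1ne : |(q : ℝ)| - 1 ≠ 0 := by intro hc; nlinarith
  have hTb : |T| ≤ 1 / (|(q : ℝ)| - 1) := by
    have hG : HasSum (fun k : ℕ => |r| ^ (k + 1)) (|r| / (1 - |r|)) := by
      have h := (hasSum_geometric_of_abs_lt_one (r := |r|) (by rwa [abs_abs])).mul_left |r|
      have he : (fun k : ℕ => |r| * |r| ^ k) = fun k : ℕ => |r| ^ (k + 1) := by
        funext k; rw [pow_succ]; ring
      rw [he] at h
      simpa [div_eq_mul_inv] using h
    have hbd : ∀ k : ℕ, |(s (k + 1) : ℝ) * r ^ (k + 1)| ≤ |r| ^ (k + 1) := by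
      intro k
      rw [abs_mul, abs_pow]
      have h1 : |(s (k + 1) : ℝ)| ≤ 1 := by
        have h2 : ((|s (k + 1)| : ℤ) : ℝ) ≤ 1 := by exact_mod_cast hsb (k + 1)
        rwa [Int.cast_abs] at h2
      nlinarith [pow_nonneg (abs_nonneg r) (k + 1), abs_nonneg ((s (k+1) : ℝ))]
    have h7 : |T| ≤ |r| / (1 - |r|) := by
      rw [abs_le]
      exact ⟨hasSum_le (fun k => neg_le_of_abs_le (hbd k)) hG.neg hT,
        hasSum_le (fun k => le_of_abs_le (hbd k)) hT hG⟩
    have h8 : |r| / (1 - |r|) = 1 / (|(q : ℝ)| - 1) := by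
      rw [hrdef, abs_inv]
      have hne : 1 - |(q : ℝ)|⁻¹ ≠ 0 := by
        have : |(q : ℝ)|⁻¹ < 1 := by rwa [hrdef, abs_inv] at hwq
        intro hc; nlinarith
      field_simp
    linarith [h7, h8.le, h8.ge]
  have hfac : 1 - (p : ℝ) * r = ((q : ℝ) - p) / q := by
    rw [hrdef]; field_simp
  have habs2 : |1 - (p : ℝ) * r| = |(p : ℝ) - (q : ℝ)| / |(q : ℝ)| := by
    rw [hfac, abs_div, abs_sub_comm]
  calc |x| = |T| * |1 - (p : ℝ) * r| := by
        rw [hxT, show T - (p : ℝ) * r * T = T * (1 - (p : ℝ) * r) by ring, abs_mul]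
    _ = |T| * (|(p : ℝ) - (q : ℝ)| / |(q : ℝ)|) := by rw [habs2]
    _ ≤ 1 / (|(q : ℝ)| - 1) * (|(p : ℝ) - (q : ℝ)| / |(q : ℝ)|) :=
        mul_le_mul_of_nonneg_right hTb (by positivity)
    _ = |(p : ℝ) - (q : ℝ)| / (|(q : ℝ)| * (|(q : ℝ)| - 1)) := by
        rw [div_mul_div_comm, one_mul, mul_comm]

theorem stmt_7 (p q m : ℤ) (hp : 2 ≤ p) (hq : 2 ≤ |q|)
    (hm1 : p + 1 < m) (hm2 : m < 2 * p - 1) :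
    (|p - q| : ℝ) / ((|q| : ℝ) * ((|q| : ℝ) - 1)) ∈ setQ p q m ∧
    -((|p - q| : ℝ) / ((|q| : ℝ) * ((|q| : ℝ) - 1))) ∈ setQ p q m ∧
    ∀ x ∈ setQ p q m, |x| ≤ (|p - q| : ℝ) / ((|q| : ℝ) * ((|q| : ℝ) - 1)) := by
  have hc1 : ∀ (c : ℤ), c = (if 0 ≤ q then q - p else p - q) → |c| = |p - q| := by
    intro c hc
    by_cases hcase : 0 ≤ q
    · rw [hc, if_pos hcase, abs_sub_comm]
    · rw [hc, if_neg hcase]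
  set c : ℤ := if 0 ≤ q then q - p else p - q with hcdef
  have hcabs : |c| = |p - q| := hc1 c rfl
  set ε : ℤ := if 0 ≤ c then 1 else -1 with hεdef
  have hε : ε = 1 ∨ ε = -1 := by by_cases h : 0 ≤ c <;> simp [hεdef, h]
  have hε' : -ε = 1 ∨ -ε = -1 := by rcases hε with h | h <;> rw [h] <;> simp
  have h1 : ε * c = |c| := by
    by_cases hcase : 0 ≤ c
    · rw [hεdef, if_pos hcase, one_mul, abs_of_nonneg hcase]
    · rw [hεdef, if_neg hcase, abs_of_neg (by omega)]; ring
  have hcastabs : ((|p - q| : ℤ) : ℝ) = |(p : ℝ) - (q : ℝ)| := by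
    rw [Int.cast_abs]; push_cast; ring_nf
  refine ⟨?_, ?_, bound_aux p q m hp hq hm2⟩
  · have h := mem_aux p q m ε hp hq hm1 hε
    rw [← hcdef] at h
    have hval : ((ε * c : ℤ) : ℝ) = |(p : ℝ) - (q : ℝ)| := by
      rw [h1, hcabs, hcastabs]
    rwa [hval] at h
  · have h := mem_aux p q m (-ε) hp hq hm1 hε'
    rw [← hcdef] at h
    have hval : ((-ε * c : ℤ) : ℝ) = -|(p : ℝ) - (q : ℝ)| := by
      rw [show -ε * c = -(ε * c) by ring, h1, hcabs]
      push_cast [Int.cast_abs]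
      ring_nf
    rw [hval, neg_div] at h
    exact h
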